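/- Suppose u ∈ C²(Ω̄) satisfies S_k(D²u(x) - A(x) - B(x)) = f(x) in Ω̄, where A(x) is symmetric, B(x) is skew-symmetric with operator norm ‖B(x)‖ ≤ δ λ_min(ω(x)) for ω(x) = D²u(x) - A(x), 0 < δ < 1, ω(x) positive definite, and 0 < f₀ ≤ f(x) ≤ f₁. Then for every x ∈ Ω̄: λ_min(ω(x)) ≤ (f₁/C(n,k))^{1/k} and λ_max(ω(x)) ≥ ((1+δ²)^{-⌊k/2⌋} f₀ / C(n,k))^{1/k}. -/

import Mathlib

open Matrix

/-- The sum of all principal k×k minors of a real n×n matrix. -/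
noncomputable def Sk {n : ℕ} (k : ℕ) (M : Matrix (Fin n) (Fin n) ℝ) : ℝ :=
  ∑ s : {s : Finset (Fin n) // s.card = k},
    (M.submatrix (s.1.orderEmbOfFin s.2) (s.1.orderEmbOfFin s.2)).det

/-- The operator (spectral) norm of a real matrix. -/
noncomputable def opNorm {n : ℕ} (M : Matrix (Fin n) (Fin n) ℝ) : ℝ :=
  ‖(Matrix.toEuclideanCLM (𝕜 := ℝ) (n := Fin n)) M‖

/-- Smallest eigenvalue of a (Hermitian) real matrix. -/
noncomputable def lamMin {n : ℕ} (M : Matrix (Fin n) (Fin n) ℝ) : ℝ :=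
  if h : M.IsHermitian then ⨅ i, h.eigenvalues i else 0

/-- Largest eigenvalue of a (Hermitian) real matrix. -/
noncomputable def lamMax {n : ℕ} (M : Matrix (Fin n) (Fin n) ℝ) : ℝ :=
  if h : M.IsHermitian then ⨆ i, h.eigenvalues i else 0

lemma inner_dot {m : ℕ} (x y : EuclideanSpace ℝ (Fin m)) :
    (inner ℝ x y : ℝ) = (x : Fin m → ℝ) ⬝ᵥ (y : Fin m → ℝ) := by
  simp [PiLp.inner_apply, dotProduct, RCLike.inner_apply, mul_comm]

lemma herm_transpose {m : ℕ} {M : Matrix (Fin m) (Fin m) ℝ} (hM : M.IsHermitian) : Mᵀ = M := by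
  rw [← Matrix.conjTranspose_eq_transpose_of_trivial]; exact hM

lemma quad_expand {m : ℕ} {M : Matrix (Fin m) (Fin m) ℝ} (hM : M.IsHermitian)
    (v : EuclideanSpace ℝ (Fin m)) :
    (v : Fin m → ℝ) ⬝ᵥ (M *ᵥ (v : Fin m → ℝ)) =
      ∑ i, hM.eigenvalues i * (inner ℝ (hM.eigenvectorBasis i) v : ℝ)^2 := by
  classical
  set b := hM.eigenvectorBasis with hb
  have key : ∀ i, (⇑(b i) : Fin m → ℝ) ⬝ᵥ (M *ᵥ (v : Fin m → ℝ))
      = hM.eigenvalues i * ((⇑(b i) : Fin m → ℝ) ⬝ᵥ (v : Fin m → ℝ)) := by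
    intro i
    rw [dotProduct_mulVec, ← Matrix.mulVec_transpose, herm_transpose hM,
      hM.mulVec_eigenvectorBasis]
    simp [smul_dotProduct, hb]
  have hsum := hM.eigenvectorBasis.sum_inner_mul_inner v
    ((WithLp.equiv 2 (Fin m → ℝ)).symm (M *ᵥ (v : Fin m → ℝ)))
  have h1 : (inner ℝ v ((WithLp.equiv 2 (Fin m → ℝ)).symm (M *ᵥ (v : Fin m → ℝ))) : ℝ)
      = (v : Fin m → ℝ) ⬝ᵥ (M *ᵥ (v : Fin m → ℝ)) := inner_dot _ _
  rw [h1] at hsum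
  rw [← hsum]
  congr 1; ext i
  have h2 : (inner ℝ (b i) ((WithLp.equiv 2 (Fin m → ℝ)).symm (M *ᵥ (v : Fin m → ℝ))) : ℝ)
      = (⇑(b i) : Fin m → ℝ) ⬝ᵥ (M *ᵥ (v : Fin m → ℝ)) := inner_dot _ _
  have h3 : (inner ℝ (b i) v : ℝ) = (⇑(b i) : Fin m → ℝ) ⬝ᵥ (v : Fin m → ℝ) := inner_dot _ _
  rw [h2, key i, ← h3, real_inner_comm v (b i)]; ring

lemma dot_self_expand {m : ℕ} {M : Matrix (Fin m) (Fin m) ℝ} (hM : M.IsHermitian)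
    (v : EuclideanSpace ℝ (Fin m)) :
    (v : Fin m → ℝ) ⬝ᵥ (v : Fin m → ℝ) = ∑ i, (inner ℝ (hM.eigenvectorBasis i) v : ℝ)^2 := by
  have hsum := hM.eigenvectorBasis.sum_inner_mul_inner v v
  rw [inner_dot] at hsum
  rw [← hsum]
  congr 1; ext i
  rw [real_inner_comm v (hM.eigenvectorBasis i)]; ring
section
variable {m : ℕ}

lemma eig_ge {M : Matrix (Fin m) (Fin m) ℝ} (hM : M.IsHermitian) {c : ℝ}
    (h : ∀ v : Fin m → ℝ, c * (v ⬝ᵥ v) ≤ v ⬝ᵥ (M *ᵥ v)) (i : Fin m) :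
    c ≤ hM.eigenvalues i := by
  have hv : (⇑(hM.eigenvectorBasis i) : Fin m → ℝ) ⬝ᵥ ⇑(hM.eigenvectorBasis i) = 1 := by
    have h1 : ‖hM.eigenvectorBasis i‖ = 1 := hM.eigenvectorBasis.orthonormal.1 i
    have := real_inner_self_eq_norm_sq (hM.eigenvectorBasis i)
    rw [EuclideanSpace.inner_eq_star_dotProduct] at this
    simpa [h1] using this
  have he := hM.eigenvalues_eq i
  simp only [star_trivial, RCLike.re_to_real] at he
  have := h (⇑(hM.eigenvectorBasis i))
  rw [hv] at this
  rw [he]; simpa using this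

lemma eig_le {M : Matrix (Fin m) (Fin m) ℝ} (hM : M.IsHermitian) {c : ℝ}
    (h : ∀ v : Fin m → ℝ, v ⬝ᵥ (M *ᵥ v) ≤ c * (v ⬝ᵥ v)) (i : Fin m) :
    hM.eigenvalues i ≤ c := by
  have hv : (⇑(hM.eigenvectorBasis i) : Fin m → ℝ) ⬝ᵥ ⇑(hM.eigenvectorBasis i) = 1 := by
    have h1 : ‖hM.eigenvectorBasis i‖ = 1 := hM.eigenvectorBasis.orthonormal.1 i
    have := real_inner_self_eq_norm_sq (hM.eigenvectorBasis i)
    rw [EuclideanSpace.inner_eq_star_dotProduct] at this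
    simpa [h1] using this
  have he := hM.eigenvalues_eq i
  simp only [star_trivial, RCLike.re_to_real] at he
  have := h (⇑(hM.eigenvectorBasis i))
  rw [hv] at this
  rw [he]; simpa using this

/-- determinant bounds from quadratic form bounds -/
lemma det_bounds {M : Matrix (Fin m) (Fin m) ℝ} (hM : M.IsHermitian) {a b : ℝ} (ha : 0 ≤ a)
    (hlow : ∀ v : Fin m → ℝ, a * (v ⬝ᵥ v) ≤ v ⬝ᵥ (M *ᵥ v))
    (hhigh : ∀ v : Fin m → ℝ, v ⬝ᵥ (M *ᵥ v) ≤ b * (v ⬝ᵥ v)) :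
    a ^ m ≤ M.det ∧ M.det ≤ b ^ m := by
  have hdet : M.det = ∏ i, hM.eigenvalues i := by
    have := hM.det_eq_prod_eigenvalues
    simpa using this
  constructor
  · rw [hdet]
    calc a ^ m = ∏ _i : Fin m, a := by simp
    _ ≤ ∏ i, hM.eigenvalues i :=
      Finset.prod_le_prod (fun _ _ => ha) (fun i _ => eig_ge hM hlow i)
  · rw [hdet]
    calc ∏ i, hM.eigenvalues i ≤ ∏ _i : Fin m, b :=
      Finset.prod_le_prod (fun i _ => le_trans ha (eig_ge hM hlow i)) (fun i _ => eig_le hM hhigh i)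
    _ = b ^ m := by simp
end
lemma dot_self_nonneg {m : ℕ} (v : Fin m → ℝ) : 0 ≤ v ⬝ᵥ v :=
  Fintype.sum_nonneg fun i => mul_self_nonneg (v i)

section
section
variable {m : ℕ} {N : Matrix (Fin m) (Fin m) ℝ} {δ : ℝ}

lemma det_one_sub_skew (hδ : 0 < δ) (hNsk : Nᵀ = -N)
    (hNq : ∀ v : Fin m → ℝ, (N *ᵥ v) ⬝ᵥ (N *ᵥ v) ≤ δ^2 * (v ⬝ᵥ v)) :
    1 ≤ (1 - N).det ∧ (1 - N).det ≤ (1 + δ^2)^(m / 2) := by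
  classical
  set G := Nᵀ * N with hGdef
  have hGh : G.IsHermitian := by
    show Gᴴ = G
    rw [Matrix.conjTranspose_eq_transpose_of_trivial, hGdef, Matrix.transpose_mul,
      Matrix.transpose_transpose]
  have hGq : ∀ v : Fin m → ℝ, v ⬝ᵥ (G *ᵥ v) = (N *ᵥ v) ⬝ᵥ (N *ᵥ v) := by
    intro v
    rw [hGdef, ← mulVec_mulVec, dotProduct_mulVec, Matrix.vecMul_transpose]
  have hν0 : ∀ i, 0 ≤ hGh.eigenvalues i := by
    intro i
    refine eig_ge hGh (fun v => ?_) i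
    rw [hGq, zero_mul]
    exact dot_self_nonneg _
  have hν1 : ∀ i, hGh.eigenvalues i ≤ δ^2 := by
    intro i
    refine eig_le hGh (fun v => ?_) i
    rw [hGq]; exact hNq v
  -- det (1 - N) ^ 2 = det (1 + G)
  have hsq : (1 - N).det ^ 2 = (1 + G).det := by
    have h1 : (1 - N)ᵀ * (1 - N) = 1 + G := by
      rw [Matrix.transpose_sub, Matrix.transpose_one, hNsk, hGdef, hNsk]
      rw [Matrix.sub_mul, Matrix.mul_sub, Matrix.mul_sub]
      simp only [Matrix.one_mul, Matrix.mul_one, Matrix.neg_mul]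
      abel
    rw [← h1, det_mul, det_transpose]; ring
  -- det (1 + G) = ∏ (1 + ν i)
  have hdetG : (1 + G).det = ∏ i, (1 + hGh.eigenvalues i) := by
    set V := (hGh.eigenvectorUnitary : Matrix (Fin m) (Fin m) ℝ) with hV
    have hVmem := hGh.eigenvectorUnitary.2
    have hV2 : V * star V = 1 := (Unitary.mem_iff.1 hVmem).2
    have hspec := hGh.spectral_theorem
    rw [Unitary.conjStarAlgAut_apply] at hspec
    have h2 : (1 : Matrix (Fin m) (Fin m) ℝ) + G
        = V * (1 + diagonal (RCLike.ofReal ∘ hGh.eigenvalues)) * star V := by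
      rw [Matrix.mul_add, Matrix.add_mul, Matrix.mul_one, hV2, ← hspec]
    rw [h2, det_mul, det_mul]
    have h3 : V.det * (star V).det = 1 := by rw [← det_mul, hV2, det_one]
    have h4 : (1 + diagonal (RCLike.ofReal ∘ hGh.eigenvalues) :
        Matrix (Fin m) (Fin m) ℝ).det = ∏ i, (1 + hGh.eigenvalues i) := by
      rw [← Matrix.diagonal_one, Matrix.diagonal_add, det_diagonal]
      simp
    calc V.det * (1 + diagonal (RCLike.ofReal ∘ hGh.eigenvalues) :
        Matrix (Fin m) (Fin m) ℝ).det * (star V).det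
        = (V.det * (star V).det) * (1 + diagonal (RCLike.ofReal ∘ hGh.eigenvalues) :
        Matrix (Fin m) (Fin m) ℝ).det := by ring
    _ = ∏ i, (1 + hGh.eigenvalues i) := by rw [h3, h4, one_mul]
  -- bounds on the product
  have hP1 : (1:ℝ) ≤ ∏ i, (1 + hGh.eigenvalues i) := by
    calc (1:ℝ) = ∏ _i : Fin m, 1 := by simp
    _ ≤ ∏ i, (1 + hGh.eigenvalues i) :=
      Finset.prod_le_prod (fun i _ => by norm_num) (fun i _ => by linarith [hν0 i])
  have hP2 : ∏ i, (1 + hGh.eigenvalues i) ≤ (1 + δ^2)^(2 * (m / 2)) := by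
    rcases Nat.even_or_odd m with he | ho
    · have hm : 2 * (m / 2) = m := Nat.two_mul_div_two_of_even he
      rw [hm]
      calc ∏ i, (1 + hGh.eigenvalues i) ≤ ∏ _i : Fin m, (1 + δ^2) :=
        Finset.prod_le_prod (fun i _ => by linarith [hν0 i]) (fun i _ => by linarith [hν1 i])
      _ = (1 + δ^2)^m := by simp
    · -- m odd : N is singular
      have hdN : N.det = 0 := by
        have h5 : N.det = -N.det := by
          calc N.det = Nᵀ.det := (det_transpose N).symm
          _ = (-N).det := by rw [hNsk]
          _ = (-1)^(Fintype.card (Fin m)) * N.det := det_neg N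
          _ = -N.det := by
              rw [Fintype.card_fin, ho.neg_one_pow]; ring
        linarith
      have hdG : G.det = 0 := by rw [hGdef, det_mul, det_transpose, hdN, mul_zero]
      have hprod0 : ∏ i, hGh.eigenvalues i = 0 := by
        have := hGh.det_eq_prod_eigenvalues
        simp only [RCLike.ofReal_real_eq_id, id_eq] at this
        rw [← this]
        exact_mod_cast hdG
      obtain ⟨j, -, hj⟩ := Finset.prod_eq_zero_iff.1 hprod0
      have hm : 2 * (m / 2) = m - 1 := by
        obtain ⟨t, ht⟩ := ho; omega
      rw [hm]
      rw [← Finset.mul_prod_erase Finset.univ _ (Finset.mem_univ j), hj]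
      simp only [add_zero, one_mul]
      calc ∏ i ∈ Finset.univ.erase j, (1 + hGh.eigenvalues i)
          ≤ ∏ _i ∈ Finset.univ.erase j, (1 + δ^2) :=
        Finset.prod_le_prod (fun i _ => by linarith [hν0 i]) (fun i _ => by linarith [hν1 i])
      _ = (1 + δ^2)^(m - 1) := by
          rw [Finset.prod_const, Finset.card_erase_of_mem (Finset.mem_univ j)]
          simp
  -- positivity of det (1 - N)
  have hne : ∀ t : ℝ, ((1 : Matrix (Fin m) (Fin m) ℝ) - t • N).det ≠ 0 := by
    intro t h0
    obtain ⟨v, hv0, hv⟩ := (Matrix.exists_mulVec_eq_zero_iff).2 h0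
    have hveq : v = t • (N *ᵥ v) := by
      have : v - t • (N *ᵥ v) = 0 := by
        rw [← hv, Matrix.sub_mulVec, Matrix.one_mulVec, Matrix.smul_mulVec]
      linear_combination (norm := module) this
    have hskew0 : v ⬝ᵥ (N *ᵥ v) = 0 := by
      have h6 : v ⬝ᵥ (N *ᵥ v) = -(v ⬝ᵥ (N *ᵥ v)) := by
        calc v ⬝ᵥ (N *ᵥ v) = (Nᵀ *ᵥ v) ⬝ᵥ v := by
              rw [dotProduct_mulVec, ← Matrix.mulVec_transpose]
        _ = -(v ⬝ᵥ (N *ᵥ v)) := by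
              rw [hNsk, Matrix.neg_mulVec, neg_dotProduct, dotProduct_comm]
      linarith
    have hvv : v ⬝ᵥ v = 0 := by
      nth_rewrite 2 [hveq]
      rw [dotProduct_smul, hskew0, smul_zero]
    exact hv0 (dotProduct_self_eq_zero.1 hvv)
  have hcont : Continuous fun t : ℝ => ((1 : Matrix (Fin m) (Fin m) ℝ) - t • N).det :=
    (continuous_const.sub (continuous_id.smul continuous_const)).matrix_det
  have hdpos : 0 < (1 - N).det := by
    by_contra hle
    push_neg at hle
    have hle' : ((1 : Matrix (Fin m) (Fin m) ℝ) - (1:ℝ) • N).det ≤ 0 := by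
      rw [one_smul]; exact hle
    have h7 : ((1 : Matrix (Fin m) (Fin m) ℝ) - (1:ℝ) • N).det < 0 :=
      lt_of_le_of_ne hle' (hne 1)
    have h8 : ((1 : Matrix (Fin m) (Fin m) ℝ) - (0:ℝ) • N).det = 1 := by simp
    have := intermediate_value_Icc' (by norm_num : (0:ℝ) ≤ 1) hcont.continuousOn
    have h9 : (0:ℝ) ∈ Set.Icc (((1 : Matrix (Fin m) (Fin m) ℝ) - (1:ℝ) • N).det)
        (((1 : Matrix (Fin m) (Fin m) ℝ) - (0:ℝ) • N).det) := by
      rw [h8]; exact ⟨h7.le, by norm_num⟩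
    obtain ⟨c, -, hc⟩ := this h9
    exact hne c hc
  -- conclude
  have hd2 : (1 - N).det ^ 2 = ∏ i, (1 + hGh.eigenvalues i) := by rw [hsq, hdetG]
  constructor
  · nlinarith [hd2, hP1, hdpos]
  · have hc0 : (0:ℝ) < (1 + δ^2)^(m / 2) := by positivity
    have hcsq : ((1 + δ^2)^(m / 2))^2 = (1 + δ^2)^(2 * (m / 2)) := by
      rw [← pow_mul, mul_comm]
    nlinarith [hd2, hP2, hdpos, hc0, hcsq]

end

open scoped MatrixOrder in
lemma exists_psd_sqrt {m : ℕ} {W : Matrix (Fin m) (Fin m) ℝ} (h : W.PosSemidef) :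
    ∃ S : Matrix (Fin m) (Fin m) ℝ, S.PosSemidef ∧ S * S = W :=
  ⟨CFC.sqrt W, (CFC.sqrt_nonneg W).posSemidef, CFC.sqrt_mul_sqrt_self W h.nonneg⟩

section
variable {m : ℕ} {W B : Matrix (Fin m) (Fin m) ℝ} {a δ : ℝ}

lemma key_det (ha : 0 < a) (hδ : 0 < δ)
    (hWh : W.IsHermitian) (hBsk : Bᵀ = -B)
    (hlow : ∀ v : Fin m → ℝ, a * (v ⬝ᵥ v) ≤ v ⬝ᵥ (W *ᵥ v))
    (hBq : ∀ v : Fin m → ℝ, (B *ᵥ v) ⬝ᵥ (B *ᵥ v) ≤ (δ * a)^2 * (v ⬝ᵥ v)) :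
    W.det ≤ (W - B).det ∧ (W - B).det ≤ (1 + δ^2)^(m / 2) * W.det := by
  classical
  -- W is positive definite
  have hWpd : W.PosDef := by
    refine Matrix.PosDef.of_dotProduct_mulVec_pos hWh (fun x hx => ?_)
    simp only [star_trivial]
    have h1 : 0 < x ⬝ᵥ x :=
      lt_of_le_of_ne (dot_self_nonneg x) (fun h => hx (dotProduct_self_eq_zero.1 h.symm))
    calc (0:ℝ) < a * (x ⬝ᵥ x) := by positivity
    _ ≤ _ := hlow x
  obtain ⟨S, hSps, hSS⟩ := exists_psd_sqrt hWpd.posSemidef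
  have hSh : S.IsHermitian := hSps.1
  have hSt : Sᵀ = S := herm_transpose hSh
  have hWdet : 0 < W.det := hWpd.det_pos
  have hSdetne : IsUnit S.det := by
    have h2 : S.det * S.det = W.det := by rw [← det_mul, hSS]
    refine isUnit_iff_ne_zero.2 (fun h => ?_)
    rw [h, mul_zero] at h2; exact hWdet.ne h2
  have hS1 : S * S⁻¹ = 1 := mul_nonsing_inv _ hSdetne
  have hS2 : S⁻¹ * S = 1 := nonsing_inv_mul _ hSdetne
  have hSit : (S⁻¹)ᵀ = S⁻¹ := by rw [Matrix.transpose_nonsing_inv, hSt]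
  set N := S⁻¹ * B * S⁻¹ with hNdef
  have hNsk : Nᵀ = -N := by
    rw [hNdef, Matrix.transpose_mul, Matrix.transpose_mul, hSit, hBsk]
    simp [Matrix.mul_assoc, Matrix.mul_neg, Matrix.neg_mul]
  -- factorization
  have hSNS : S * N * S = B := by
    rw [hNdef]
    calc S * (S⁻¹ * B * S⁻¹) * S = (S * S⁻¹) * B * (S⁻¹ * S) := by
          simp only [Matrix.mul_assoc]
    _ = B := by rw [hS1, hS2, Matrix.one_mul, Matrix.mul_one]
  have hfact : W - B = S * (1 - N) * S := by
    rw [Matrix.mul_sub, Matrix.mul_one, Matrix.sub_mul, hSNS, hSS]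
  have hdet1 : (W - B).det = W.det * (1 - N).det := by
    rw [hfact, det_mul, det_mul, ← hSS, det_mul]; ring
  -- quadratic bound for S⁻¹
  have hSinvq : ∀ z : Fin m → ℝ, (S⁻¹ *ᵥ z) ⬝ᵥ (S⁻¹ *ᵥ z) ≤ a⁻¹ * (z ⬝ᵥ z) := by
    intro z
    set y := S⁻¹ *ᵥ z with hy
    have hz : S *ᵥ y = z := by rw [hy, mulVec_mulVec, hS1, one_mulVec]
    have h3 : (S *ᵥ y) ⬝ᵥ (S *ᵥ y) = y ⬝ᵥ (W *ᵥ y) := by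
      rw [dotProduct_mulVec, ← Matrix.mulVec_transpose, hSt, mulVec_mulVec, hSS,
        dotProduct_comm]
    have h4 : a * (y ⬝ᵥ y) ≤ z ⬝ᵥ z := by rw [← hz, h3]; exact hlow y
    have := mul_le_mul_of_nonneg_left h4 (inv_nonneg.2 ha.le)
    rw [← mul_assoc, inv_mul_cancel₀ ha.ne', one_mul] at this
    exact this
  -- quadratic bound for N
  have hNq : ∀ v : Fin m → ℝ, (N *ᵥ v) ⬝ᵥ (N *ᵥ v) ≤ δ^2 * (v ⬝ᵥ v) := by
    intro v
    have hNv : N *ᵥ v = S⁻¹ *ᵥ (B *ᵥ (S⁻¹ *ᵥ v)) := by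
      rw [hNdef, ← mulVec_mulVec, ← mulVec_mulVec]
    set u := S⁻¹ *ᵥ v with hu
    calc (N *ᵥ v) ⬝ᵥ (N *ᵥ v) ≤ a⁻¹ * ((B *ᵥ u) ⬝ᵥ (B *ᵥ u)) := by
          rw [hNv]; exact hSinvq _
    _ ≤ a⁻¹ * ((δ * a)^2 * (u ⬝ᵥ u)) := by
          have := hBq u
          exact mul_le_mul_of_nonneg_left this (inv_nonneg.2 ha.le)
    _ ≤ a⁻¹ * ((δ * a)^2 * (a⁻¹ * (v ⬝ᵥ v))) := by
          have := hSinvq v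
          have h5 : (0:ℝ) ≤ a⁻¹ * (δ * a)^2 := by positivity
          calc a⁻¹ * ((δ * a)^2 * (u ⬝ᵥ u)) = (a⁻¹ * (δ * a)^2) * (u ⬝ᵥ u) := by ring
          _ ≤ (a⁻¹ * (δ * a)^2) * (a⁻¹ * (v ⬝ᵥ v)) := mul_le_mul_of_nonneg_left this h5
          _ = a⁻¹ * ((δ * a)^2 * (a⁻¹ * (v ⬝ᵥ v))) := by ring
    _ = δ^2 * (v ⬝ᵥ v) := by field_simp
  obtain ⟨hd1, hd2⟩ := det_one_sub_skew hδ hNsk hNq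
  constructor
  · rw [hdet1]
    calc W.det = W.det * 1 := (mul_one _).symm
    _ ≤ W.det * (1 - N).det := mul_le_mul_of_nonneg_left hd1 hWdet.le
  · rw [hdet1]
    calc W.det * (1 - N).det ≤ W.det * ((1 + δ^2)^(m / 2)) :=
      mul_le_mul_of_nonneg_left hd2 hWdet.le
    _ = (1 + δ^2)^(m / 2) * W.det := by ring
end

section
variable {k n : ℕ} {e : Fin k → Fin n}

lemma sum_ext (he : Function.Injective e) (F : Fin n → ℝ)
    (hF : ∀ p, (∀ i, e i ≠ p) → F p = 0) :
    ∑ p, F p = ∑ i, F (e i) := by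
  classical
  have himg := Finset.sum_image (s := Finset.univ) (f := F) (g := e)
    (fun a _ b _ h => he h)
  rw [← himg]
  symm
  apply Finset.sum_subset (Finset.subset_univ _)
  intro p _ hp
  apply hF
  intro i hi
  exact hp (Finset.mem_image.2 ⟨i, Finset.mem_univ i, hi⟩)

lemma ext_apply (he : Function.Injective e) (v : Fin k → ℝ) (i : Fin k) :
    Function.extend e v 0 (e i) = v i := he.extend_apply _ _ _

lemma ext_apply' (v : Fin k → ℝ) (p : Fin n) (hp : ∀ i, e i ≠ p) :
    Function.extend e v 0 p = 0 := by
  rw [Function.extend_apply' _ _ _ (by rintro ⟨i, rfl⟩; exact hp i rfl)]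
  rfl

lemma mulVec_ext (he : Function.Injective e) (M : Matrix (Fin n) (Fin n) ℝ) (v : Fin k → ℝ)
    (i : Fin k) :
    (M *ᵥ Function.extend e v 0) (e i) = ((M.submatrix e e) *ᵥ v) i := by
  show (M (e i)) ⬝ᵥ Function.extend e v 0 = (M.submatrix e e i) ⬝ᵥ v
  unfold dotProduct
  rw [sum_ext he (fun q => M (e i) q * Function.extend e v 0 q)
    (fun p hp => by simp only [ext_apply' v p hp, mul_zero])]
  congr 1
  ext j
  rw [ext_apply he]
  rfl

lemma dot_ext (he : Function.Injective e) (v : Fin k → ℝ) :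
    (Function.extend e v 0) ⬝ᵥ (Function.extend e v 0) = v ⬝ᵥ v := by
  unfold dotProduct
  rw [sum_ext he (fun q => Function.extend e v 0 q * Function.extend e v 0 q)
    (fun p hp => by simp only [ext_apply' v p hp, mul_zero])]
  congr 1
  ext i
  rw [ext_apply he]

lemma quad_ext (he : Function.Injective e) (M : Matrix (Fin n) (Fin n) ℝ) (v : Fin k → ℝ) :
    v ⬝ᵥ ((M.submatrix e e) *ᵥ v) = (Function.extend e v 0) ⬝ᵥ (M *ᵥ Function.extend e v 0) := by
  unfold dotProduct
  rw [sum_ext he (fun q => Function.extend e v 0 q * (M *ᵥ Function.extend e v 0) q)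
    (fun p hp => by simp only [ext_apply' v p hp, zero_mul])]
  congr 1
  ext i
  rw [ext_apply he, mulVec_ext he]

lemma mulVec_sq_ext (he : Function.Injective e) (M : Matrix (Fin n) (Fin n) ℝ) (v : Fin k → ℝ) :
    ((M.submatrix e e) *ᵥ v) ⬝ᵥ ((M.submatrix e e) *ᵥ v)
      ≤ (M *ᵥ Function.extend e v 0) ⬝ᵥ (M *ᵥ Function.extend e v 0) := by
  classical
  unfold dotProduct
  have h1 : ∀ i : Fin k, ((M.submatrix e e) *ᵥ v) i * ((M.submatrix e e) *ᵥ v) i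
      = (M *ᵥ Function.extend e v 0) (e i) * (M *ᵥ Function.extend e v 0) (e i) := by
    intro i; rw [mulVec_ext he]
  calc ∑ i, ((M.submatrix e e) *ᵥ v) i * ((M.submatrix e e) *ᵥ v) i
      = ∑ i, (M *ᵥ Function.extend e v 0) (e i) * (M *ᵥ Function.extend e v 0) (e i) := by
        simp only [h1]
  _ = ∑ p ∈ Finset.univ.image e,
        (M *ᵥ Function.extend e v 0) p * (M *ᵥ Function.extend e v 0) p := by
        exact (Finset.sum_image
          (f := fun p => (M *ᵥ Function.extend e v 0) p * (M *ᵥ Function.extend e v 0) p)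
          (g := e) (fun a _ b _ h => he h)).symm
  _ ≤ ∑ p, (M *ᵥ Function.extend e v 0) p * (M *ᵥ Function.extend e v 0) p :=
        Finset.sum_le_sum_of_subset_of_nonneg (Finset.subset_univ _)
          (fun p _ _ => mul_self_nonneg _)
end

section
variable {n : ℕ} {M : Matrix (Fin n) (Fin n) ℝ}

lemma lamMin_eq (hM : M.IsHermitian) : lamMin M = ⨅ i, hM.eigenvalues i := by
  simp only [lamMin, dif_pos hM]

lemma lamMax_eq (hM : M.IsHermitian) : lamMax M = ⨆ i, hM.eigenvalues i := by
  simp only [lamMax, dif_pos hM]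

lemma lamMin_quad (hM : M.IsHermitian) (hn : 0 < n) :
    ∀ v : Fin n → ℝ, lamMin M * (v ⬝ᵥ v) ≤ v ⬝ᵥ (M *ᵥ v) := by
  haveI : Nonempty (Fin n) := Fin.pos_iff_nonempty.1 hn
  intro v
  have hq := quad_expand hM (WithLp.toLp 2 v)
  have hd := dot_self_expand hM (WithLp.toLp 2 v)
  simp only [WithLp.ofLp_toLp] at hq hd
  rw [lamMin_eq hM, hq, hd, Finset.mul_sum]
  refine Finset.sum_le_sum (fun i _ => ?_)
  have h1 : (⨅ j, hM.eigenvalues j) ≤ hM.eigenvalues i :=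
    ciInf_le (Set.Finite.bddBelow (Set.finite_range _)) i
  exact mul_le_mul_of_nonneg_right h1 (sq_nonneg _)

lemma lamMax_quad (hM : M.IsHermitian) (hn : 0 < n) :
    ∀ v : Fin n → ℝ, v ⬝ᵥ (M *ᵥ v) ≤ lamMax M * (v ⬝ᵥ v) := by
  haveI : Nonempty (Fin n) := Fin.pos_iff_nonempty.1 hn
  intro v
  have hq := quad_expand hM (WithLp.toLp 2 v)
  have hd := dot_self_expand hM (WithLp.toLp 2 v)
  simp only [WithLp.ofLp_toLp] at hq hd
  rw [lamMax_eq hM, hq, hd, Finset.mul_sum]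
  refine Finset.sum_le_sum (fun i _ => ?_)
  have h1 : hM.eigenvalues i ≤ ⨆ j, hM.eigenvalues j :=
    le_ciSup (Set.Finite.bddAbove (Set.finite_range _)) i
  exact mul_le_mul_of_nonneg_right h1 (sq_nonneg _)

lemma lamMin_pos (hM : M.PosDef) (hn : 0 < n) : 0 < lamMin M := by
  haveI : Nonempty (Fin n) := Fin.pos_iff_nonempty.1 hn
  obtain ⟨i0, hi0⟩ := Finite.exists_min hM.1.eigenvalues
  rw [lamMin_eq hM.1]
  exact lt_of_lt_of_le (hM.eigenvalues_pos i0) (le_ciInf hi0)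

lemma lamMax_pos (hM : M.PosDef) (hn : 0 < n) : 0 < lamMax M := by
  haveI : Nonempty (Fin n) := Fin.pos_iff_nonempty.1 hn
  obtain ⟨i0⟩ := (inferInstance : Nonempty (Fin n))
  rw [lamMax_eq hM.1]
  exact lt_of_lt_of_le (hM.eigenvalues_pos i0)
    (le_ciSup (Set.Finite.bddAbove (Set.finite_range _)) i0)

lemma opNorm_quad {c : ℝ} (hc : 0 ≤ c) (h : opNorm M ≤ c) :
    ∀ v : Fin n → ℝ, (M *ᵥ v) ⬝ᵥ (M *ᵥ v) ≤ c^2 * (v ⬝ᵥ v) := by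
  intro v
  set v' : EuclideanSpace ℝ (Fin n) := (WithLp.equiv 2 (Fin n → ℝ)).symm v with hv'
  have key : (Matrix.toEuclideanCLM (𝕜 := ℝ) M) v' = (WithLp.equiv 2 (Fin n → ℝ)).symm (M *ᵥ v) :=
    Matrix.toEuclideanCLM_toLp M v
  have hle : ‖(Matrix.toEuclideanCLM (𝕜 := ℝ) M) v'‖ ≤ c * ‖v'‖ := by
    calc ‖(Matrix.toEuclideanCLM (𝕜 := ℝ) M) v'‖ ≤ opNorm M * ‖v'‖ :=
      ContinuousLinearMap.le_opNorm _ v'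
    _ ≤ c * ‖v'‖ := mul_le_mul_of_nonneg_right h (norm_nonneg _)
  have h1 : (M *ᵥ v) ⬝ᵥ (M *ᵥ v)
      = ‖(WithLp.equiv 2 (Fin n → ℝ)).symm (M *ᵥ v)‖^2 := by
    rw [← real_inner_self_eq_norm_sq, inner_dot]; rfl
  have h2 : v ⬝ᵥ v = ‖v'‖^2 := by
    rw [← real_inner_self_eq_norm_sq, inner_dot]; rfl
  rw [h1, h2, ← key]
  nlinarith [hle, norm_nonneg ((Matrix.toEuclideanCLM (𝕜 := ℝ) M) v'), norm_nonneg v', hc]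
end

/-- A priori eigenvalue bounds for strictly admissible / δ-admissible solutions of
S_k(D²u - A - B) = f. -/
theorem eigenvalue_bounds_admissible {n k : ℕ} (hk : 2 ≤ k) (hkn : k ≤ n)
    (K : Set (Fin n → ℝ)) (u : (Fin n → ℝ) → ℝ) (hu : ContDiff ℝ 2 u)
    (A B : (Fin n → ℝ) → Matrix (Fin n) (Fin n) ℝ)
    (f : (Fin n → ℝ) → ℝ) (δ f₀ f₁ : ℝ)
    (hδ0 : 0 < δ) (hδ1 : δ < 1) (hf0 : 0 < f₀)
    (hA : ∀ x ∈ K, (A x)ᵀ = A x) (hB : ∀ x ∈ K, (B x)ᵀ = -(B x))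
    (ω : (Fin n → ℝ) → Matrix (Fin n) (Fin n) ℝ)
    (hω : ∀ x, ω x =
      Matrix.of (fun i j => iteratedFDeriv ℝ 2 u x ![Pi.single i 1, Pi.single j 1]) - A x)
    (hpos : ∀ x ∈ K, (ω x).PosDef)
    (hBnorm : ∀ x ∈ K, opNorm (B x) ≤ δ * lamMin (ω x))
    (heq : ∀ x ∈ K, Sk k (ω x - B x) = f x)
    (hf : ∀ x ∈ K, f₀ ≤ f x ∧ f x ≤ f₁) :
    ∀ x ∈ K,
      lamMin (ω x) ≤ (f₁ / (n.choose k : ℝ)) ^ ((1 : ℝ) / k) ∧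
      ((((1 + δ ^ 2) ^ (k / 2) : ℝ))⁻¹ * f₀ / (n.choose k : ℝ)) ^ ((1 : ℝ) / k)
        ≤ lamMax (ω x) := by
  intro x hx
  classical
  have hn : 0 < n := by omega
  set W := ω x with hWdef
  have hW : W.PosDef := hpos x hx
  have hWh : W.IsHermitian := hW.1
  have hWt : Wᵀ = W := herm_transpose hWh
  set a := lamMin W with hadef
  set b := lamMax W with hbdef
  have ha : 0 < a := lamMin_pos hW hn
  have hb : 0 < b := lamMax_pos hW hn
  have hlow := lamMin_quad hWh hn
  have hhigh := lamMax_quad hWh hn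
  have hBx : (B x)ᵀ = -(B x) := hB x hx
  have hBq : ∀ v : Fin n → ℝ, ((B x) *ᵥ v) ⬝ᵥ ((B x) *ᵥ v) ≤ (δ * a)^2 * (v ⬝ᵥ v) :=
    opNorm_quad (by positivity) (hBnorm x hx)
  have hC : (0:ℝ) < (n.choose k : ℝ) := by exact_mod_cast Nat.choose_pos hkn
  have hkR : ((k:ℝ)) ≠ 0 := by positivity
  set P := ((1 + δ^2)^(k/2) : ℝ) with hPdef
  have hP : 0 < P := by positivity
  -- per-submatrix facts
  have main : ∀ s : {s : Finset (Fin n) // s.card = k},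
      (a^k ≤ (W.submatrix (s.1.orderEmbOfFin s.2) (s.1.orderEmbOfFin s.2)).det
      ∧ (W.submatrix (s.1.orderEmbOfFin s.2) (s.1.orderEmbOfFin s.2)).det ≤ b^k)
      ∧ ((W.submatrix (s.1.orderEmbOfFin s.2) (s.1.orderEmbOfFin s.2)).det
          ≤ ((W - B x).submatrix (s.1.orderEmbOfFin s.2) (s.1.orderEmbOfFin s.2)).det
      ∧ ((W - B x).submatrix (s.1.orderEmbOfFin s.2) (s.1.orderEmbOfFin s.2)).det
          ≤ P * (W.submatrix (s.1.orderEmbOfFin s.2) (s.1.orderEmbOfFin s.2)).det) := by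
    intro s
    set e : Fin k → Fin n := ⇑(s.1.orderEmbOfFin s.2) with hedef
    have he : Function.Injective e := (s.1.orderEmbOfFin s.2).injective
    set W' := W.submatrix e e with hW'def
    set B' := (B x).submatrix e e with hB'def
    have hsub : (W - B x).submatrix e e = W' - B' := by
      ext i j; rfl
    have hW'h : W'.IsHermitian := by
      show W'ᴴ = W'
      rw [Matrix.conjTranspose_eq_transpose_of_trivial, hW'def, Matrix.transpose_submatrix, hWt]
    have hB'sk : B'ᵀ = -B' := by
      rw [hB'def, Matrix.transpose_submatrix, hBx]
      ext i j; simp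
    have hlow' : ∀ v : Fin k → ℝ, a * (v ⬝ᵥ v) ≤ v ⬝ᵥ (W' *ᵥ v) := by
      intro v
      calc a * (v ⬝ᵥ v) = a * ((Function.extend e v 0) ⬝ᵥ (Function.extend e v 0)) := by
            rw [dot_ext he]
      _ ≤ (Function.extend e v 0) ⬝ᵥ (W *ᵥ (Function.extend e v 0)) := hlow _
      _ = v ⬝ᵥ (W' *ᵥ v) := (quad_ext he W v).symm
    have hhigh' : ∀ v : Fin k → ℝ, v ⬝ᵥ (W' *ᵥ v) ≤ b * (v ⬝ᵥ v) := by
      intro v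
      calc v ⬝ᵥ (W' *ᵥ v) = (Function.extend e v 0) ⬝ᵥ (W *ᵥ (Function.extend e v 0)) :=
            quad_ext he W v
      _ ≤ b * ((Function.extend e v 0) ⬝ᵥ (Function.extend e v 0)) := hhigh _
      _ = b * (v ⬝ᵥ v) := by rw [dot_ext he]
    have hBq' : ∀ v : Fin k → ℝ, (B' *ᵥ v) ⬝ᵥ (B' *ᵥ v) ≤ (δ * a)^2 * (v ⬝ᵥ v) := by
      intro v
      calc (B' *ᵥ v) ⬝ᵥ (B' *ᵥ v)
          ≤ ((B x) *ᵥ (Function.extend e v 0)) ⬝ᵥ ((B x) *ᵥ (Function.extend e v 0)) :=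
            mulVec_sq_ext he (B x) v
      _ ≤ (δ * a)^2 * ((Function.extend e v 0) ⬝ᵥ (Function.extend e v 0)) := hBq _
      _ = (δ * a)^2 * (v ⬝ᵥ v) := by rw [dot_ext he]
    have fact1 := det_bounds hW'h ha.le hlow' hhigh'
    have fact2 := key_det ha hδ0 hW'h hB'sk hlow' hBq'
    rw [hsub]
    exact ⟨fact1, fact2⟩
  -- assemble sums
  have hcard : (Fintype.card {s : Finset (Fin n) // s.card = k}) = n.choose k := by
    rw [Fintype.card_finset_len, Fintype.card_fin]
  have hS1 : (n.choose k : ℝ) * a^k ≤ Sk k W := by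
    rw [Sk]
    calc (n.choose k : ℝ) * a^k
        = ∑ _s : {s : Finset (Fin n) // s.card = k}, a^k := by
          rw [Finset.sum_const, Finset.card_univ, hcard, nsmul_eq_mul]
    _ ≤ _ := Finset.sum_le_sum (fun s _ => (main s).1.1)
  have hS2 : Sk k W ≤ (n.choose k : ℝ) * b^k := by
    rw [Sk]
    calc ∑ s : {s : Finset (Fin n) // s.card = k},
        (W.submatrix (s.1.orderEmbOfFin s.2) (s.1.orderEmbOfFin s.2)).det
        ≤ ∑ _s : {s : Finset (Fin n) // s.card = k}, b^k :=
          Finset.sum_le_sum (fun s _ => (main s).1.2)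
    _ = (n.choose k : ℝ) * b^k := by
          rw [Finset.sum_const, Finset.card_univ, hcard, nsmul_eq_mul]
  have hS3 : Sk k W ≤ Sk k (W - B x) := by
    rw [Sk, Sk]
    exact Finset.sum_le_sum (fun s _ => (main s).2.1)
  have hS4 : Sk k (W - B x) ≤ P * Sk k W := by
    rw [Sk, Sk, Finset.mul_sum]
    exact Finset.sum_le_sum (fun s _ => (main s).2.2)
  have heqx : Sk k (W - B x) = f x := heq x hx
  obtain ⟨hfx0, hfx1⟩ := hf x hx
  have hroot : ∀ c : ℝ, 0 < c → (c^k : ℝ) ^ ((1:ℝ)/k) = c := by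
    intro c hc
    rw [← Real.rpow_natCast c k, ← Real.rpow_mul hc.le, mul_one_div, div_self hkR,
      Real.rpow_one]
  constructor
  · -- upper bound on lamMin
    have h1 : a^k ≤ f₁ / (n.choose k : ℝ) := by
      rw [le_div_iff₀ hC]
      have : (n.choose k : ℝ) * a^k ≤ f₁ := by
        calc (n.choose k : ℝ) * a^k ≤ Sk k W := hS1
        _ ≤ Sk k (W - B x) := hS3
        _ = f x := heqx
        _ ≤ f₁ := hfx1
      linarith
    calc a = (a^k : ℝ) ^ ((1:ℝ)/k) := (hroot a ha).symm
    _ ≤ (f₁ / (n.choose k : ℝ)) ^ ((1:ℝ)/k) :=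
      Real.rpow_le_rpow (by positivity) h1 (by positivity)
  · -- lower bound on lamMax
    have h2 : P⁻¹ * f₀ / (n.choose k : ℝ) ≤ b^k := by
      have hchain : f₀ ≤ P * ((n.choose k : ℝ) * b^k) := by
        calc f₀ ≤ f x := hfx0
        _ = Sk k (W - B x) := heqx.symm
        _ ≤ P * Sk k W := hS4
        _ ≤ P * ((n.choose k : ℝ) * b^k) := mul_le_mul_of_nonneg_left hS2 hP.le
      rw [div_le_iff₀ hC]
      have hPinv : P⁻¹ * f₀ ≤ P⁻¹ * (P * ((n.choose k : ℝ) * b^k)) :=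
        mul_le_mul_of_nonneg_left hchain (inv_nonneg.2 hP.le)
      rw [← mul_assoc, inv_mul_cancel₀ hP.ne', one_mul] at hPinv
      calc P⁻¹ * f₀ ≤ (n.choose k : ℝ) * b^k := hPinv
      _ = b^k * (n.choose k : ℝ) := by ring
    calc (P⁻¹ * f₀ / (n.choose k : ℝ)) ^ ((1:ℝ)/k) ≤ (b^k : ℝ) ^ ((1:ℝ)/k) :=
      Real.rpow_le_rpow (by positivity) h2 (by positivity)
    _ = b := hroot b hb
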